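/- There exists a regularly recurrent sequence x : ℕ₊ → {−1, 1} (i.e., for every n ≥ 1 there is p ≥ 1 such that x(n + mp) = x(n) for all m ≥ 0) such that limsup_{N→∞} (1/N)·∑_{n=1}^{N} x(n)·μMob(n) > 0. -/

import Mathlib

open Filter Topology

namespace ToeplitzMoebiusAux

open Finset ArithmeticFunction

/-- Periods of the Toeplitz construction. -/
def qq : ℕ → ℕ
  | 0 => 1
  | k+1 => 65536^(k+1) * qq k

/-- Window lengths of the Toeplitz construction. -/
def NN : ℕ → ℕ
  | 0 => 0
  | k+1 => 256^(k+1) * qq k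

lemma qq_pos (k : ℕ) : 0 < qq k := by
  induction k with
  | zero => simp [qq]
  | succ k ih =>
    show 0 < 65536^(k+1) * qq k
    exact Nat.mul_pos (Nat.pow_pos (by norm_num)) ih

lemma qq_dvd {j k : ℕ} (h : j ≤ k) : qq j ∣ qq k := by
  induction k with
  | zero => simp_all
  | succ k ih =>
    rcases Nat.lt_or_ge j (k+1) with h' | h'
    · refine (ih (Nat.lt_succ_iff.mp h')).trans ⟨65536^(k+1), ?_⟩
      show qq (k+1) = _
      rw [qq]; ring
    · have : j = k+1 := le_antisymm h h'
      subst this; rfl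

lemma qq_mono {j k : ℕ} (h : j ≤ k) : qq j ≤ qq k :=
  Nat.le_of_dvd (qq_pos k) (qq_dvd h)

lemma qq_succ_eq (k : ℕ) : qq (k+1) = 256^(k+1) * NN (k+1) := by
  show 65536^(k+1) * qq k = 256^(k+1) * (256^(k+1) * qq k)
  rw [← mul_assoc, ← mul_pow]
  norm_num

lemma NN_le_qq (k : ℕ) : NN k ≤ qq k := by
  cases k with
  | zero => simp [NN]
  | succ k =>
    rw [qq_succ_eq]
    exact Nat.le_mul_of_pos_left _ (Nat.pow_pos (by norm_num))

lemma NN_pos (k : ℕ) (hk : 1 ≤ k) : 0 < NN k := by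
  cases k with
  | zero => omega
  | succ k => exact Nat.mul_pos (Nat.pow_pos (by norm_num)) (qq_pos k)

lemma lt_NN_succ (n : ℕ) : n < NN (n+1) := by
  have h1 : n < 2^(n+1) := (Nat.lt_two_pow_self (n := n)).trans (Nat.pow_lt_pow_succ (by norm_num))
  have h2 : (2:ℕ)^(n+1) ≤ 256^(n+1) := Nat.pow_le_pow_left (by norm_num) _
  calc n < 2^(n+1) := h1
    _ ≤ 256^(n+1) := h2
    _ ≤ 256^(n+1) * qq n := Nat.le_mul_of_pos_right _ (qq_pos n)

lemma exK (n : ℕ) : ∃ k, n % qq k < NN k :=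
  ⟨n+1, lt_of_le_of_lt (Nat.mod_le _ _) (lt_NN_succ n)⟩

/-- The stage at which position `n` is filled. -/
def KK (n : ℕ) : ℕ := Nat.find (exK n)

/-- The `±1`-valued version of the Möbius function. -/
def vv (n : ℕ) : ℤ := if moebius n = 0 then 1 else moebius n

/-- The Toeplitz sequence. -/
def xx (n : ℕ) : ℤ := vv (n % qq (KK n))

lemma vv_eq_one_or (n : ℕ) : vv n = 1 ∨ vv n = -1 := by
  unfold vv
  by_cases h : moebius n = 0
  · simp [h]
  · simp only [h, if_false]
    have hsq : Squarefree n := moebius_ne_zero_iff_squarefree.mp h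
    rw [moebius_apply_of_squarefree hsq]
    exact neg_one_pow_eq_or ℤ _

lemma mu_tri (n : ℕ) : moebius n = 0 ∨ moebius n = 1 ∨ moebius n = -1 := by
  by_cases h : moebius n = 0
  · exact Or.inl h
  · right
    have := vv_eq_one_or n
    unfold vv at this
    simpa [h] using this

lemma xx_eq_one_or (n : ℕ) : xx n = 1 ∨ xx n = -1 := vv_eq_one_or _

lemma KK_add (n m : ℕ) : KK (n + m * qq (KK n)) = KK n := by
  rw [KK, Nat.find_eq_iff]
  constructor
  · rw [Nat.add_mul_mod_self_right]
    exact Nat.find_spec (exK n)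
  · intro j hj
    obtain ⟨c, hc⟩ := qq_dvd (le_of_lt hj)
    have : n + m * (qq j * c) = n + (m * c) * qq j := by ring
    rw [hc, this, Nat.add_mul_mod_self_right]
    exact Nat.find_min (exK n) hj

lemma xx_periodic (n m : ℕ) : xx (n + m * qq (KK n)) = xx n := by
  unfold xx
  rw [KK_add, Nat.add_mul_mod_self_right]

lemma KK_eq {k n : ℕ} (hn : n < NN k) (h : ∀ j, j < k → ¬ (n % qq j < NN j)) : KK n = k := by
  rw [KK, Nat.find_eq_iff]
  refine ⟨?_, h⟩
  rwa [Nat.mod_eq_of_lt (lt_of_lt_of_le hn (NN_le_qq k))]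

lemma xx_eq_vv {k n : ℕ} (hn : n < NN k) (h : ∀ j, j < k → ¬ (n % qq j < NN j)) :
    xx n = vv n := by
  unfold xx
  rw [KK_eq hn h, Nat.mod_eq_of_lt (lt_of_lt_of_le hn (NN_le_qq k))]

/-- counting residues: `#{n ∈ [1,M] : n % Q < L} ≤ (M/Q+1)*L` -/
lemma count_mod (M Q L : ℕ) :
    ((Finset.Icc 1 M).filter (fun n => n % Q < L)).card ≤ (M / Q + 1) * L := by
  have := Finset.card_le_card_of_injOn (fun n => (n / Q, n % Q))
    (s := (Finset.Icc 1 M).filter (fun n => n % Q < L))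
    (t := (Finset.range (M / Q + 1)) ×ˢ (Finset.range L))
    (by
      intro n hn
      simp only [Finset.coe_filter, Set.mem_setOf_eq, Finset.mem_filter, Finset.mem_Icc] at hn
      simp only [Finset.coe_product, Finset.coe_range, Set.mem_prod, Set.mem_Iio]
      exact ⟨Nat.lt_succ_of_le (Nat.div_le_div_right hn.1.2), hn.2⟩)
    (by
      intro a _ b _ hab
      simp only [Prod.mk.injEq] at hab
      have ha := Nat.div_add_mod a Q
      have hb := Nat.div_add_mod b Q
      rw [← ha, ← hb, hab.1, hab.2])
  simpa using this

/-- telescoping -/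
lemma tele (M : ℕ) (hM : 2 ≤ M) :
    ∑ d ∈ Finset.Icc 3 M, (1:ℝ)/((d:ℝ)*((d:ℝ)-1)) = 1/2 - 1/(M:ℝ) := by
  induction M, hM using Nat.le_induction with
  | base => norm_num
  | succ M hM ih =>
    rw [Finset.sum_Icc_succ_top (by omega), ih]
    have h1 : (M:ℝ) ≠ 0 := by positivity
    have h2 : (M:ℝ) + 1 ≠ 0 := by positivity
    push_cast
    simp only [add_sub_cancel_right]
    field_simp
    ring

lemma tele' (M : ℕ) : ∑ d ∈ Finset.Icc 3 M, (1:ℝ)/((d:ℝ)*((d:ℝ)-1)) ≤ 1/2 := by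
  rcases Nat.lt_or_ge M 2 with h | h
  · have : Finset.Icc 3 M = ∅ := by
      apply Finset.Icc_eq_empty; omega
    simp [this]
  · rw [tele M h]
    have : 0 ≤ 1/(M:ℝ) := by positivity
    linarith

/-- squarefree count lower bound -/
lemma sqfree_count (M : ℕ) :
    (M:ℝ)/4 ≤ (((Finset.Icc 1 M).filter (fun n => Squarefree n)).card : ℝ) := by
  classical
  have hsplit := Finset.card_filter_add_card_filter_not
    (s := Finset.Icc 1 M) (fun n => Squarefree n)
  have hsub : (Finset.Icc 1 M).filter (fun n => ¬ Squarefree n) ⊆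
      (Finset.Icc 2 M).biUnion (fun d => (Finset.Icc 1 M).filter (fun n => d * d ∣ n)) := by
    intro n hn
    simp only [Finset.mem_filter, Finset.mem_Icc] at hn
    obtain ⟨⟨hn1, hnM⟩, hnsq⟩ := hn
    have : ¬ ∀ p, Nat.Prime p → ¬ p * p ∣ n := by
      rw [← Nat.squarefree_iff_prime_squarefree]; exact hnsq
    push_neg at this
    obtain ⟨p, hp, hpn⟩ := this
    simp only [Finset.mem_biUnion, Finset.mem_Icc, Finset.mem_filter]
    refine ⟨p, ⟨hp.two_le, ?_⟩, ⟨⟨hn1, hnM⟩, hpn⟩⟩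
    have hpd : p ∣ n := dvd_trans (Dvd.intro p rfl) hpn
    exact le_trans (Nat.le_of_dvd (by omega) hpd) hnM
  have hcard1 : ((Finset.Icc 1 M).filter (fun n => ¬ Squarefree n)).card ≤
      ∑ d ∈ Finset.Icc 2 M, ((Finset.Icc 1 M).filter (fun n => d * d ∣ n)).card :=
    le_trans (Finset.card_le_card hsub) Finset.card_biUnion_le
  have hcard2 : ∀ d : ℕ, ((Finset.Icc 1 M).filter (fun n => d * d ∣ n)).card = M / (d * d) := by
    intro d
    have : Finset.Icc 1 M = Finset.Ioc 0 M := Finset.Icc_add_one_left_eq_Ioc 0 M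
    rw [this]
    exact Nat.Ioc_filter_dvd_card_eq_div M (d*d)
  have hreal : (∑ d ∈ Finset.Icc 2 M, (M / (d * d) : ℕ) : ℝ) ≤ (M:ℝ) * (3/4) := by
    push_cast
    calc (∑ d ∈ Finset.Icc 2 M, ((M / (d * d) : ℕ) : ℝ))
        ≤ ∑ d ∈ Finset.Icc 2 M, (M:ℝ) / ((d:ℝ)*(d:ℝ)) := by
          apply Finset.sum_le_sum
          intro d _
          calc ((M / (d * d) : ℕ) : ℝ) ≤ (M:ℝ) / ((d*d : ℕ):ℝ) := Nat.cast_div_le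
            _ = (M:ℝ) / ((d:ℝ)*(d:ℝ)) := by push_cast; ring
      _ ≤ (M:ℝ)*(3/4) := by
          rcases Nat.lt_or_ge M 2 with h | h
          · have : Finset.Icc 2 M = ∅ := by apply Finset.Icc_eq_empty; omega
            rw [this, Finset.sum_empty]; positivity
          · have hins : Finset.Icc 2 M = insert 2 (Finset.Icc 3 M) := by
              ext a; simp [Finset.mem_Icc, Finset.mem_insert]; omega
            rw [hins, Finset.sum_insert (by simp [Finset.mem_Icc])]
            have hbd : ∑ d ∈ Finset.Icc 3 M, (M:ℝ) / ((d:ℝ)*(d:ℝ)) ≤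
                ∑ d ∈ Finset.Icc 3 M, (M:ℝ) * (1/((d:ℝ)*((d:ℝ)-1))) := by
              apply Finset.sum_le_sum
              intro d hd
              simp only [Finset.mem_Icc] at hd
              have hd3 : (3:ℝ) ≤ (d:ℝ) := by exact_mod_cast hd.1
              have h1 : (0:ℝ) < (d:ℝ)*((d:ℝ)-1) := by nlinarith
              have h2 : (d:ℝ)*((d:ℝ)-1) ≤ (d:ℝ)*(d:ℝ) := by nlinarith
              rw [div_eq_mul_one_div]
              apply mul_le_mul_of_nonneg_left _ (by positivity)
              apply one_div_le_one_div_of_le h1 h2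
            rw [← Finset.mul_sum] at hbd
            have htel := tele' M
            have hM0 : (0:ℝ) ≤ (M:ℝ) := by positivity
            have : (M:ℝ) * ∑ d ∈ Finset.Icc 3 M, (1:ℝ)/((d:ℝ)*((d:ℝ)-1)) ≤ (M:ℝ) * (1/2) :=
              mul_le_mul_of_nonneg_left htel hM0
            nlinarith
  have hcardIcc : (Finset.Icc 1 M).card = M := by simp
  have h1 : (((Finset.Icc 1 M).filter (fun n => ¬ Squarefree n)).card : ℝ) ≤ (M:ℝ)*(3/4) := by
    refine le_trans ?_ hreal
    exact_mod_cast le_trans hcard1 (le_of_eq (Finset.sum_congr rfl (fun d _ => hcard2 d)))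
  have h2 : (((Finset.Icc 1 M).filter (fun n => Squarefree n)).card : ℝ)
      + (((Finset.Icc 1 M).filter (fun n => ¬ Squarefree n)).card : ℝ) = (M:ℝ) := by
    exact_mod_cast congrArg (fun x : ℕ => (x:ℝ)) (hsplit.trans hcardIcc)
  linarith

/-- forced positions are few -/
lemma forced_count (k M : ℕ) (hM : ∀ j, 1 ≤ j → j < k → qq j ≤ M) :
    (((Finset.Icc 1 M).filter (fun n => ∃ j, j < k ∧ n % qq j < NN j)).card : ℝ)
      ≤ (M:ℝ)/32 := by
  classical
  have hsub : (Finset.Icc 1 M).filter (fun n => ∃ j, j < k ∧ n % qq j < NN j) ⊆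
      (Finset.range k).biUnion (fun j => (Finset.Icc 1 M).filter (fun n => n % qq j < NN j)) := by
    intro n hn
    simp only [Finset.mem_filter] at hn
    obtain ⟨hn1, j, hjk, hj⟩ := hn
    simp only [Finset.mem_biUnion, Finset.mem_range, Finset.mem_filter]
    exact ⟨j, hjk, hn1, hj⟩
  have hcard1 := le_trans (Finset.card_le_card hsub) Finset.card_biUnion_le
  have hterm : ∀ j ∈ Finset.range k,
      (((Finset.Icc 1 M).filter (fun n => n % qq j < NN j)).card : ℝ)
        ≤ ((M:ℝ)/64) * (1/2)^j := by
    intro j hj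
    simp only [Finset.mem_range] at hj
    cases j with
    | zero =>
      have : (Finset.Icc 1 M).filter (fun n => n % qq 0 < NN 0) = ∅ := by
        apply Finset.filter_false_of_mem
        intro n _
        show ¬ (n % qq 0 < NN 0)
        simp [NN]
      rw [this]
      simp
      positivity
    | succ i =>
      set j := i + 1
      have hq : qq j ≤ M := hM j (by omega) hj
      have hqpos : (0:ℝ) < (qq j : ℝ) := by exact_mod_cast qq_pos j
      have hc := count_mod M (qq j) (NN j)
      have hstep1 : (((Finset.Icc 1 M).filter (fun n => n % qq j < NN j)).card : ℝ)
          ≤ ((M / qq j : ℕ) + 1 : ℝ) * (NN j : ℝ) := by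
        exact_mod_cast hc
      have hstep2 : ((M / qq j : ℕ) : ℝ) ≤ (M:ℝ)/(qq j : ℝ) := Nat.cast_div_le
      have hstep3 : (1:ℝ) ≤ (M:ℝ)/(qq j : ℝ) := by
        rw [le_div_iff₀ hqpos, one_mul]
        exact_mod_cast hq
      have hNNpos : (0:ℝ) ≤ (NN j : ℝ) := Nat.cast_nonneg _
      have hstep4 : (((Finset.Icc 1 M).filter (fun n => n % qq j < NN j)).card : ℝ)
          ≤ (2*(M:ℝ)/(qq j : ℝ)) * (NN j : ℝ) := by
        refine hstep1.trans ?_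
        apply mul_le_mul_of_nonneg_right _ hNNpos
        have : ((M / qq j : ℕ) + 1 : ℝ) ≤ (M:ℝ)/(qq j:ℝ) + (M:ℝ)/(qq j:ℝ) := by linarith
        calc ((M / qq j : ℕ) + 1 : ℝ) ≤ (M:ℝ)/(qq j:ℝ) + (M:ℝ)/(qq j:ℝ) := this
          _ = 2*(M:ℝ)/(qq j:ℝ) := by ring
      have hqNN : (qq j : ℝ) = 256^j * (NN j : ℝ) := by
        have := qq_succ_eq i
        exact_mod_cast this
      have hNNpos' : (0:ℝ) < (NN j : ℝ) := by
        exact_mod_cast NN_pos j (by omega)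
      have heq : (2*(M:ℝ)/(qq j : ℝ)) * (NN j : ℝ) = 2*(M:ℝ)/(256:ℝ)^j := by
        rw [hqNN]
        field_simp
      rw [heq] at hstep4
      refine hstep4.trans ?_
      -- 2M/256^j <= (M/64)*(1/2)^j
      have hM0 : (0:ℝ) ≤ (M:ℝ) := by positivity
      have hpow : (128:ℝ) * 2^j ≤ 256^j := by
        have h256 : (256:ℝ)^j = 128^j * 2^j := by rw [← mul_pow]; norm_num
        have h128 : (128:ℝ) ≤ 128^j := by
          calc (128:ℝ) = 128^1 := by norm_num
            _ ≤ 128^j := pow_le_pow_right₀ (by norm_num) (by omega)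
        have h2pos : (0:ℝ) < 2^j := by positivity
        rw [h256]
        nlinarith
      have hrhs : ((M:ℝ)/64) * (1/2)^j = (M:ℝ) / (64 * 2^j) := by
        rw [div_pow, one_pow]
        field_simp
      rw [hrhs, div_le_div_iff₀ (by positivity) (by positivity)]
      nlinarith [mul_le_mul_of_nonneg_left hpow hM0]
  have hsum : (∑ j ∈ Finset.range k,
        (((Finset.Icc 1 M).filter (fun n => n % qq j < NN j)).card : ℝ))
      ≤ ((M:ℝ)/64) * 2 := by
    calc (∑ j ∈ Finset.range k,
          (((Finset.Icc 1 M).filter (fun n => n % qq j < NN j)).card : ℝ))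
        ≤ ∑ j ∈ Finset.range k, ((M:ℝ)/64) * (1/2)^j := Finset.sum_le_sum hterm
      _ = ((M:ℝ)/64) * ∑ j ∈ Finset.range k, (1/2:ℝ)^j := by rw [Finset.mul_sum]
      _ ≤ ((M:ℝ)/64) * 2 :=
          mul_le_mul_of_nonneg_left (sum_geometric_two_le k) (by positivity)
  have hcast : (((Finset.Icc 1 M).filter (fun n => ∃ j, j < k ∧ n % qq j < NN j)).card : ℝ)
      ≤ ∑ j ∈ Finset.range k,
        (((Finset.Icc 1 M).filter (fun n => n % qq j < NN j)).card : ℝ) := by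
    exact_mod_cast hcard1
  linarith [hcast.trans hsum]

/-- Main correlation bound at scale `NN k - 1`. -/
lemma main_sum (k : ℕ) (hk : 1 ≤ k) :
    (3/16:ℝ) * ((NN k - 1 : ℕ):ℝ) ≤
      ∑ n ∈ Finset.Icc 1 (NN k - 1), (xx n : ℝ) * ((moebius n : ℤ) : ℝ) := by
  classical
  set M := NN k - 1 with hMdef
  have hMlt : M < NN k := Nat.sub_lt (NN_pos k hk) one_pos
  have hqM : ∀ j, 1 ≤ j → j < k → qq j ≤ M := by
    intro j h1 h2
    have hj : qq j ≤ qq (k-1) := qq_mono (by omega)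
    have : qq (k-1) < NN k := by
      cases k with
      | zero => omega
      | succ k' =>
        show qq k' < 256^(k'+1) * qq k'
        have h1q : 1 * qq k' < 256^(k'+1) * qq k' := by
          refine (Nat.mul_lt_mul_right (qq_pos k')).mpr ?_
          calc (1:ℕ) < 256^1 := by norm_num
            _ ≤ 256^(k'+1) := Nat.pow_le_pow_right (by norm_num) (by omega)
        omega
    omega
  set P : ℕ → Prop := fun n => ∃ j, j < k ∧ n % qq j < NN j with hP
  have hpt : ∀ n ∈ Finset.Icc 1 M,
      ((moebius n : ℤ):ℝ)^2 - 2*(if P n then (1:ℝ) else 0)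
        ≤ (xx n : ℝ) * ((moebius n : ℤ):ℝ) := by
    intro n hn
    simp only [Finset.mem_Icc] at hn
    by_cases hp : P n
    · rw [if_pos hp]
      rcases mu_tri n with h | h | h <;> rcases xx_eq_one_or n with h' | h' <;>
        rw [h, h'] <;> norm_num
    · rw [if_neg hp]
      have hnot : ∀ j, j < k → ¬ (n % qq j < NN j) := by
        intro j hj hcon
        exact hp ⟨j, hj, hcon⟩
      have hnNN : n < NN k := lt_of_le_of_lt hn.2 hMlt
      rw [xx_eq_vv hnNN hnot]
      rcases mu_tri n with h | h | h
      · rw [h]; norm_num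
      · have hv : vv n = moebius n := by unfold vv; rw [if_neg (by rw [h]; norm_num)]
        rw [hv, h]; norm_num
      · have hv : vv n = moebius n := by unfold vv; rw [if_neg (by rw [h]; norm_num)]
        rw [hv, h]; norm_num
  have hsum1 : ∑ n ∈ Finset.Icc 1 M,
        (((moebius n : ℤ):ℝ)^2 - 2*(if P n then (1:ℝ) else 0))
      ≤ ∑ n ∈ Finset.Icc 1 M, (xx n : ℝ) * ((moebius n : ℤ):ℝ) := Finset.sum_le_sum hpt
  have hsq : ∑ n ∈ Finset.Icc 1 M, ((moebius n : ℤ):ℝ)^2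
      = (((Finset.Icc 1 M).filter (fun n => Squarefree n)).card : ℝ) := by
    rw [← Finset.sum_boole]
    apply Finset.sum_congr rfl
    intro n _
    by_cases h : Squarefree n
    · rw [if_pos h]
      have hne : moebius n ≠ 0 := moebius_ne_zero_iff_squarefree.mpr h
      rcases mu_tri n with h0 | h1 | h1
      · exact absurd h0 hne
      · rw [h1]; norm_num
      · rw [h1]; norm_num
    · rw [if_neg h, moebius_eq_zero_of_not_squarefree h]; norm_num
  have hsum2 : ∑ n ∈ Finset.Icc 1 M, (2*(if P n then (1:ℝ) else 0))
      = 2 * (((Finset.Icc 1 M).filter P).card : ℝ) := by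
    rw [← Finset.mul_sum, Finset.sum_boole]
  rw [Finset.sum_sub_distrib, hsq, hsum2] at hsum1
  have h3 := sqfree_count M
  have h4 : (((Finset.Icc 1 M).filter P).card : ℝ) ≤ (M:ℝ)/32 := by
    have := forced_count k M hqM
    convert this using 4
  linarith

end ToeplitzMoebiusAux

open ToeplitzMoebiusAux ArithmeticFunction in
/-- There exists a one-sided Toeplitz (regularly recurrent) sequence with
values in `{-1, 1}` that is weakly correlated with the Möbius function. -/
theorem exists_toeplitz_weakly_correlated_with_moebius :
    ∃ x : ℕ → ℤ,
      (∀ n : ℕ, 1 ≤ n → x n = 1 ∨ x n = -1) ∧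
      (∀ n : ℕ, 1 ≤ n → ∃ p : ℕ, 1 ≤ p ∧ ∀ m : ℕ, x (n + m * p) = x n) ∧
      0 < Filter.limsup (fun N : ℕ =>
          (N : ℝ)⁻¹ * ∑ n ∈ Finset.Icc 1 N,
            (x n : ℝ) * (ArithmeticFunction.moebius n : ℝ)) atTop := by
  classical
  refine ⟨xx, fun n _ => xx_eq_one_or n,
    fun n _ => ⟨qq (KK n), qq_pos _, fun m => xx_periodic n m⟩, ?_⟩
  have hb : ∀ N : ℕ, (N : ℝ)⁻¹ * (∑ n ∈ Finset.Icc 1 N,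
      (xx n : ℝ) * ((moebius n : ℤ) : ℝ)) ≤ 1 := by
    intro N
    have hsum : ∑ n ∈ Finset.Icc 1 N, (xx n : ℝ) * ((moebius n : ℤ) : ℝ) ≤ (N:ℝ) := by
      calc ∑ n ∈ Finset.Icc 1 N, (xx n : ℝ) * ((moebius n : ℤ) : ℝ)
          ≤ ∑ n ∈ Finset.Icc 1 N, (1:ℝ) := by
            apply Finset.sum_le_sum
            intro n _
            rcases mu_tri n with h | h | h <;> rcases xx_eq_one_or n with h' | h' <;>
              rw [h, h'] <;> norm_num
        _ = (N:ℝ) := by simp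
    rcases Nat.eq_zero_or_pos N with h | h
    · subst h; simp
    · have hN : (0:ℝ) < (N:ℝ) := by exact_mod_cast h
      calc (N : ℝ)⁻¹ * (∑ n ∈ Finset.Icc 1 N, (xx n : ℝ) * ((moebius n : ℤ) : ℝ))
          ≤ (N : ℝ)⁻¹ * (N:ℝ) := by
            apply mul_le_mul_of_nonneg_left hsum (inv_nonneg.mpr hN.le)
        _ = 1 := inv_mul_cancel₀ hN.ne'
  have hfreq : ∃ᶠ N : ℕ in atTop, (1/8:ℝ) ≤ (N : ℝ)⁻¹ * (∑ n ∈ Finset.Icc 1 N,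
      (xx n : ℝ) * ((moebius n : ℤ) : ℝ)) := by
    rw [Filter.frequently_atTop]
    intro m
    refine ⟨NN (m+1) - 1, by have := lt_NN_succ m; omega, ?_⟩
    have hmain := main_sum (m+1) (by omega)
    set M := NN (m+1) - 1 with hM
    have hMpos : 0 < M := by
      have h256 : 256 ≤ NN (m+1) := by
        show 256 ≤ 256^(m+1) * qq m
        calc 256 = 256^1 * 1 := by norm_num
          _ ≤ 256^(m+1) * qq m :=
            Nat.mul_le_mul (Nat.pow_le_pow_right (by norm_num) (by omega)) (qq_pos m)
      omega
    have hMr : (0:ℝ) < (M:ℝ) := by exact_mod_cast hMpos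
    calc (1/8:ℝ) ≤ (M:ℝ)⁻¹ * ((3/16)*(M:ℝ)) := by
          rw [mul_comm (3/16:ℝ), ← mul_assoc, inv_mul_cancel₀ hMr.ne', one_mul]
          norm_num
      _ ≤ (M : ℝ)⁻¹ * (∑ n ∈ Finset.Icc 1 M, (xx n : ℝ) * ((moebius n : ℤ) : ℝ)) :=
          mul_le_mul_of_nonneg_left hmain (inv_nonneg.mpr hMr.le)
  have hbdd : Filter.IsBoundedUnder (· ≤ ·) Filter.atTop (fun N : ℕ =>
      (N : ℝ)⁻¹ * ∑ n ∈ Finset.Icc 1 N, (xx n : ℝ) * ((moebius n : ℤ) : ℝ)) :=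
    ⟨1, Filter.eventually_map.mpr (Filter.Eventually.of_forall hb)⟩
  have := Filter.le_limsup_of_frequently_le hfreq hbdd
  linarith
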